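/- Plain Kolmogorov complexity is not subadditive: for every ℓ ∈ ℕ there exist binary strings a, b such that C(a ⋆ b) ≥ C(a) + C(b) + ℓ, where ⋆ denotes concatenation. -/

import Mathlib

open MeasureTheory
open scoped ENNReal

/-- The length-`n` initial segment of an infinite binary sequence. -/
def pref (x : ℕ → Bool) (n : ℕ) : List Bool := List.ofFn (fun i : Fin n => x i)

/-- A set of binary strings is prefix-free if no member is a proper prefix of another. -/
def PFree (S : Set (List Bool)) : Prop := ∀ a ∈ S, ∀ b ∈ S, a <+: b → a = b

/-- Kolmogorov complexity of `b` relative to machine `M`: the least length of an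
input mapped by `M` to `b`, `∞` if there is none. -/
noncomputable def Cpx (M : List Bool →. List Bool) (b : List Bool) : ℕ∞ :=
  sInf {n : ℕ∞ | ∃ p : List Bool, b ∈ M p ∧ (p.length : ℕ∞) = n}

/-- A universal machine for plain complexity. -/
def Universal (U : List Bool →. List Bool) : Prop :=
  Partrec U ∧ ∀ L : List Bool →. List Bool, Partrec L →
    ∃ k : ℕ, ∀ b : List Bool, Cpx U b ≤ Cpx L b + (k : ℕ∞)

/-- A prefix-free universal machine: prefix-free domain, universal among machines
with prefix-free domain. -/
def PFUniversal (V : List Bool →. List Bool) : Prop :=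
  Partrec V ∧ PFree {p | (V p).Dom} ∧
    ∀ L : List Bool →. List Bool, Partrec L → PFree {p | (L p).Dom} →
      ∃ k : ℕ, ∀ b : List Bool, Cpx V b ≤ Cpx L b + (k : ℕ∞)

/-- `cyl S` is the set of infinite binary sequences extending some member of `S`. -/
def cyl (S : Set (List Bool)) : Set (ℕ → Bool) := {x | ∃ b ∈ S, pref x b.length = b}

/-- The `e`-th computably enumerable set of binary strings. -/
def W (e : ℕ) : Set (List Bool) :=
  {b | ((Denumerable.ofNat Nat.Partrec.Code e).eval (Encodable.encode b)).Dom}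

/-- The binary-digit expansion of a real number. -/
noncomputable def binSeq (r : ℝ) : ℕ → Bool := fun n => decide (⌊r * 2 ^ (n + 1)⌋ % 2 = 1)

/-- The fair-coin (uniform product) measure on Cantor space, as the pushforward of
Lebesgue measure on `(0,1]` under binary expansion. -/
noncomputable def coin : Measure (ℕ → Bool) :=
  Measure.map binSeq (volume.restrict (Set.Ioc (0 : ℝ) 1))

/-- Martin-Löf test in sense 2. -/
def MLTest (f : ℕ → ℕ) : Prop :=
  Computable f ∧ ∀ n : ℕ, coin (cyl (W (f n))) ≤ (2 : ℝ≥0∞)⁻¹ ^ n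

/-- `x` fails the sense-2 test `f`. -/
def Fails (x : ℕ → Bool) (f : ℕ → ℕ) : Prop := ∀ n : ℕ, x ∈ cyl (W (f n))

/-- Martin-Löf randomness (sense 2). -/
def MLRandom (x : ℕ → Bool) : Prop := ∀ f : ℕ → ℕ, MLTest f → ¬ Fails x f

/-- The dyadic rational value of a finite binary string. -/
noncomputable def sval (b : List Bool) : ℝ :=
  ∑ i : Fin b.length, if b.get i then ((2 : ℝ))⁻¹ ^ (i.val + 1) else 0

/-- Chaitin's halting probability of machine `V`. -/
noncomputable def Omega (V : List Bool →. List Bool) : ℝ :=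
  ∑' p : {p : List Bool // (V p).Dom}, ((2 : ℝ))⁻¹ ^ (p.val.length)

/-- Martin-Löf test in sense 1. -/
def MLTest1 (t : List Bool →. ℕ) : Prop :=
  Partrec t ∧ ∀ m : ℕ, coin (cyl {b | ∃ v ∈ t b, m ≤ v}) ≤ (2 : ℝ≥0∞)⁻¹ ^ m

/-- `x` passes the sense-1 test `t`: the values of `t` on `x`'s prefixes are bounded. -/
def Passes1 (x : ℕ → Bool) (t : List Bool →. ℕ) : Prop :=
  ∃ B : ℕ, ∀ (n : ℕ) (v : ℕ), v ∈ t (pref x n) → v ≤ B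

/-- A set of binary strings is computably enumerable. -/
def CE (S : Set (List Bool)) : Prop :=
  ∃ f : List Bool →. ℕ, Partrec f ∧ S = {b | (f b).Dom}


namespace NotSubadd

/-- Bijective base-2 index of a binary string. -/
def idx (w : List Bool) : ℕ := w.foldl (fun a b => 2 * a + cond b 2 1) 0

lemma foldl_acc : ∀ (w : List Bool) (a : ℕ),
    w.foldl (fun a b => 2 * a + cond b 2 1) a = a * 2 ^ w.length + idx w
  | [], a => by simp [idx]
  | b :: w, a => by
    have h1 := foldl_acc w (2 * a + cond b 2 1)
    have h2 := foldl_acc w (2 * 0 + cond b 2 1)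
    simp only [idx, List.foldl_cons, List.length_cons] at *
    rw [h1, h2]
    ring

lemma idx_cons (b : Bool) (w : List Bool) :
    idx (b :: w) = (cond b 2 1) * 2 ^ w.length + idx w := by
  have := foldl_acc w (2 * 0 + cond b 2 1)
  simpa [idx] using this

lemma idx_bounds : ∀ w : List Bool, 2 ^ w.length ≤ idx w + 1 ∧ idx w + 2 ≤ 2 ^ (w.length + 1)
  | [] => by simp [idx]
  | b :: w => by
    obtain ⟨ih1, ih2⟩ := idx_bounds w
    have h := idx_cons b w
    have e1 : (2:ℕ) ^ (w.length + 1) = 2 * 2 ^ w.length := by ring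
    have e2 : (2:ℕ) ^ (w.length + 1 + 1) = 4 * 2 ^ w.length := by ring
    simp only [List.length_cons, e1, e2]
    rw [e1] at ih2
    cases b <;> simp only [cond] at h <;> omega

lemma idx_log (w : List Bool) : Nat.log 2 (idx w + 1) = w.length := by
  obtain ⟨h1, h2⟩ := idx_bounds w
  exact Nat.log_eq_of_pow_le_of_lt_pow h1 (by omega)

lemma idx_inj : ∀ (v w : List Bool), idx v = idx w → v = w
  | [], [], _ => rfl
  | [], b :: w, h => by
    have h1 := (idx_bounds (b :: w)).1
    have h2 : (2:ℕ) ^ (w.length + 1) = 2 * 2 ^ w.length := by ring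
    have h3 : 1 ≤ 2 ^ w.length := Nat.one_le_two_pow
    rw [show idx ([] : List Bool) = 0 from rfl] at h
    simp only [List.length_cons] at h1
    omega
  | b :: w, [], h => ((idx_inj [] (b :: w)) h.symm).symm
  | a :: v, b :: w, h => by
    have hlen : v.length = w.length := by
      have h1 := idx_log (a :: v)
      have h2 := idx_log (b :: w)
      rw [h] at h1
      rw [h1] at h2
      simpa using h2
    have hv := idx_bounds v
    have hw := idx_bounds w
    have hcv := idx_cons a v
    have hcw := idx_cons b w
    rw [hlen] at hcv hv
    rw [hcv, hcw] at h
    have hab : a = b := by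
      cases a <;> cases b <;> simp only [cond] at h <;> first | rfl | omega
    subst hab
    have hvw : idx v = idx w := by omega
    rw [idx_inj v w hvw]

lemma two_pow_gap {d L : ℕ} (hd : 2 ≤ d) : 2 ^ (L + 1) + d ≤ 2 ^ (L + d) := by
  have e : 2 ^ (L + d) = 2 ^ (L + 1) * 2 ^ (d - 1) := by
    rw [← pow_add]; congr 1; omega
  have hB : d ≤ 2 ^ (d - 1) := by have := Nat.lt_two_pow_self (n := d - 1); omega
  have hA : 2 ≤ 2 ^ (L + 1) := by
    have : (2:ℕ) ^ 1 ≤ 2 ^ (L + 1) := Nat.pow_le_pow_right (by norm_num) (by omega)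
    simpa using this
  have h1 : 2 * (d - 1) ≤ 2 ^ (L + 1) * (d - 1) := Nat.mul_le_mul_right _ hA
  have h2 : 2 ^ (L + 1) * d ≤ 2 ^ (L + 1) * 2 ^ (d - 1) := Nat.mul_le_mul_left _ hB
  have h3 : 2 ^ (L + 1) * (d - 1) + 2 ^ (L + 1) = 2 ^ (L + 1) * d := by
    rw [← Nat.mul_succ]
    congr 1
    omega
  omega

/-- Fibers of `n ↦ n - log₂(n+1)` have diameter ≤ 1. -/
lemma fiber {s nv nw : ℕ} (hv : nv = Nat.log 2 (nv + 1) + s)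
    (hw : nw = Nat.log 2 (nw + 1) + s) (hlt : nv + 2 ≤ nw) : False := by
  set Lv := Nat.log 2 (nv + 1) with hLv
  set Lw := Nat.log 2 (nw + 1) with hLw
  set d := nw - nv with hd
  have hdeq : Lw = Lv + d := by omega
  have h1 : 2 ^ Lw ≤ nw + 1 := Nat.pow_log_le_self 2 (by omega)
  have h2 : nv + 1 < 2 ^ (Lv + 1) := Nat.lt_pow_succ_log_self (by norm_num) _
  have h3 := two_pow_gap (L := Lv) (d := d) (by omega)
  rw [hdeq] at h1
  omega

lemma unique_cand {s : ℕ} {v w : List Bool}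
    (hv : idx v = v.length + s) (hw : idx w = w.length + s)
    (hp : idx v % 2 = idx w % 2) : v = w := by
  have hv' : idx v = Nat.log 2 (idx v + 1) + s := by rw [idx_log]; omega
  have hw' : idx w = Nat.log 2 (idx w + 1) + s := by rw [idx_log]; omega
  apply idx_inj
  rcases lt_trichotomy (idx v) (idx w) with hlt | heq | hgt
  · rcases Nat.lt_or_ge (idx v + 1) (idx w) with h2 | h2
    · exact absurd (fiber hv' hw' (by omega)) id
    · omega
  · exact heq
  · rcases Nat.lt_or_ge (idx w + 1) (idx v) with h2 | h2
    · exact absurd (fiber hw' hv' (by omega)) id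
    · omega

/-- All binary strings of length ≤ B (with repetitions allowed). -/
def allLists : ℕ → List (List Bool) := fun B =>
  Nat.rec [([] : List Bool)]
    (fun _ prev => [] :: prev.flatMap (fun w => [false :: w, true :: w])) B

lemma allLists_succ (B : ℕ) :
    allLists (B + 1) = [] :: (allLists B).flatMap (fun w => [false :: w, true :: w]) := rfl

lemma mem_allLists : ∀ (B : ℕ) (w : List Bool), w.length ≤ B → w ∈ allLists B
  | 0, [], _ => by simp [allLists]
  | 0, _ :: _, h => by simp at h
  | B + 1, [], _ => by simp [allLists_succ]
  | B + 1, b :: w, h => by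
    have hmem := mem_allLists B w (by simp only [List.length_cons] at h; omega)
    rw [allLists_succ]
    refine List.mem_cons.mpr (Or.inr ?_)
    refine List.mem_flatMap.mpr ⟨w, hmem, ?_⟩
    cases b <;> simp

/-- The decompression machine. -/
def Mfun (p : List Bool) : List Bool :=
  ((allLists (p.tail.length + 2)).flatMap fun v =>
      cond ((idx v == v.length + p.tail.length) && (idx v % 2 == cond p.headI 1 0))
        [v] []).headI ++ p.tail

lemma headI_eq {l : List (List Bool)} {w : List Bool} (hne : w ∈ l)
    (huniq : ∀ v ∈ l, v = w) : l.headI = w := by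
  cases l with
  | nil => simp at hne
  | cons h t => exact huniq h (by simp)

lemma two_mul_le (m : ℕ) : 2 * m ≤ 2 ^ m + 1 := by
  induction m with
  | zero => simp
  | succ m ih =>
    have h1 : m < 2 ^ m := Nat.lt_two_pow_self
    have h2 : (2:ℕ) ^ (m + 1) = 2 * 2 ^ m := by ring
    omega

/-- Correctness of the machine: it reconstructs `w ++ q` from a parity bit and `q`,
whenever `idx w = w.length + q.length`. -/
lemma Mfun_correct (w q : List Bool) (hidx : idx w = w.length + q.length) :
    Mfun (decide (idx w % 2 = 1) :: q) = w ++ q := by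
  have htail : (decide (idx w % 2 = 1) :: q).tail = q := rfl
  have hheadI : (decide (idx w % 2 = 1) :: q).headI = decide (idx w % 2 = 1) := rfl
  unfold Mfun
  rw [htail, hheadI]
  have hparity : ∀ n : ℕ, (cond (decide (n % 2 = 1)) 1 0 : ℕ) = n % 2 := by
    intro n
    rcases Nat.mod_two_eq_zero_or_one n with h | h <;> simp [h]
  have hpred : ∀ v : List Bool,
      ((idx v == v.length + q.length) && (idx v % 2 == cond (decide (idx w % 2 = 1)) 1 0)) = true
        ↔ v = w := by
    intro v
    constructor
    · intro hb
      simp only [Bool.and_eq_true, beq_iff_eq] at hb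
      exact unique_cand hb.1 hidx (hb.2.trans (hparity (idx w)))
    · rintro rfl
      simp only [Bool.and_eq_true, beq_iff_eq]
      exact ⟨hidx, (hparity (idx v)).symm⟩
  congr 1
  apply headI_eq
  · refine List.mem_flatMap.mpr ⟨w, ?_, ?_⟩
    · apply mem_allLists
      -- w.length ≤ q.length + 2 : since idx w ≥ 2^(w.length) - 1 and idx w = w.length + q.length
      have h1 := (idx_bounds w).1
      have h2 := two_mul_le w.length
      omega
    · rw [(hpred w).mpr rfl]
      simp
  · intro v hv
    obtain ⟨u, _, hvu⟩ := List.mem_flatMap.mp hv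
    by_cases hu : ((idx u == u.length + q.length) &&
        (idx u % 2 == cond (decide (idx w % 2 = 1)) 1 0)) = true
    · rw [hu] at hvu
      simp only [cond_true, List.mem_singleton] at hvu
      rw [hvu]
      exact (hpred u).mp hu
    · rw [Bool.eq_false_iff.mpr hu] at hvu
      simp at hvu

lemma primrec_idx : Primrec idx := by
  have h : Primrec₂ (fun (_ : List Bool) (sb : ℕ × Bool) => 2 * sb.1 + cond sb.2 2 1) :=
    Primrec.to₂ <|
      Primrec.nat_add.comp
        (Primrec.nat_mul.comp (Primrec.const 2) (Primrec.fst.comp Primrec.snd))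
        (Primrec.cond (Primrec.snd.comp Primrec.snd) (Primrec.const 2) (Primrec.const 1))
  exact (Primrec.list_foldl Primrec.id (Primrec.const 0) h).of_eq fun l => rfl

lemma primrec_allLists : Primrec allLists := by
  have hstep : Primrec₂ (fun (_ : ℕ) (prev : List (List Bool)) =>
      ([] : List Bool) :: prev.flatMap (fun w => [false :: w, true :: w])) := by
    have hin : Primrec (fun q : (ℕ × List (List Bool)) × List Bool =>
        [false :: q.2, true :: q.2]) :=
      Primrec.list_cons.comp
        (Primrec.list_cons.comp (Primrec.const false) Primrec.snd)
        (Primrec.list_cons.comp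
          (Primrec.list_cons.comp (Primrec.const true) Primrec.snd)
          (Primrec.const []))
    have hout : Primrec (fun q : ℕ × List (List Bool) =>
        ([] : List Bool) :: q.2.flatMap (fun w => [false :: w, true :: w])) :=
      Primrec.list_cons.comp (Primrec.const [])
        (Primrec.list_flatMap Primrec.snd (Primrec.to₂ hin))
    exact hout
  exact (Primrec.nat_rec₁ _ hstep).of_eq fun n => rfl

lemma primrec_Mfun : Primrec Mfun := by
  have hs : Primrec (fun p : List Bool => p.tail.length) :=
    Primrec.list_length.comp Primrec.list_tail
  have hcond : Primrec (fun q : List Bool × List Bool =>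
      ((idx q.2 == q.2.length + q.1.tail.length) && (idx q.2 % 2 == cond q.1.headI 1 0))) := by
    have h1 : Primrec (fun q : List Bool × List Bool =>
        (idx q.2 == q.2.length + q.1.tail.length)) :=
      Primrec.beq.comp (primrec_idx.comp Primrec.snd)
        (Primrec.nat_add.comp (Primrec.list_length.comp Primrec.snd) (hs.comp Primrec.fst))
    have h2 : Primrec (fun q : List Bool × List Bool =>
        (idx q.2 % 2 == cond q.1.headI 1 0)) :=
      Primrec.beq.comp (Primrec.nat_mod.comp (primrec_idx.comp Primrec.snd) (Primrec.const 2))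
        (Primrec.cond (Primrec.list_headI.comp Primrec.fst) (Primrec.const 1) (Primrec.const 0))
    exact (Primrec.dom_bool₂ (· && ·)).comp h1 h2
  have hg : Primrec₂ (fun (p v : List Bool) =>
      cond ((idx v == v.length + p.tail.length) && (idx v % 2 == cond p.headI 1 0)) [v]
        ([] : List (List Bool))) :=
    Primrec.to₂ <| Primrec.cond hcond
      (Primrec.list_cons.comp Primrec.snd (Primrec.const [])) (Primrec.const [])
  have hfm : Primrec (fun p : List Bool => ((allLists (p.tail.length + 2)).flatMap fun v =>
      cond ((idx v == v.length + p.tail.length) && (idx v % 2 == cond p.headI 1 0)) [v] [])) :=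
    Primrec.list_flatMap
      (primrec_allLists.comp (Primrec.nat_add.comp hs (Primrec.const 2))) hg
  exact Primrec.list_append.comp (Primrec.list_headI.comp hfm) Primrec.list_tail

lemma cpx_le {M : List Bool →. List Bool} {b p : List Bool} (h : b ∈ M p) :
    Cpx M b ≤ (p.length : ℕ∞) :=
  sInf_le ⟨p, h, rfl⟩

lemma le_cpx {M : List Bool →. List Bool} {b : List Bool} {N : ℕ}
    (h : ∀ p, b ∈ M p → N ≤ p.length) : (N : ℕ∞) ≤ Cpx M b := by
  apply le_sInf
  rintro q ⟨p, hp, rfl⟩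
  exact_mod_cast h p hp

lemma exists_incompressible (M : List Bool →. List Bool) (N : ℕ) :
    ∃ x : List Bool, x.length = N ∧ ∀ p, x ∈ M p → N ≤ p.length := by
  by_contra hcon
  push_neg at hcon
  have h' : ∀ x : Fin N → Bool, ∃ p : List Bool, (List.ofFn x) ∈ M p ∧ p.length < N :=
    fun x => hcon (List.ofFn x) (by simp)
  choose p hp hplen using h'
  have hbound : ∀ x : Fin N → Bool, idx (p x) < 2 ^ N - 1 := by
    intro x
    have h1 := (idx_bounds (p x)).2
    have h2 : (2:ℕ) ^ ((p x).length + 1) ≤ 2 ^ N :=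
      Nat.pow_le_pow_right (by norm_num) (by have := hplen x; omega)
    have h3 : (2:ℕ) ^ 1 ≤ 2 ^ N :=
      Nat.pow_le_pow_right (by norm_num) (by have := hplen x; omega)
    simp only [pow_one] at h3
    omega
  have hinj : Function.Injective
      (fun x : Fin N → Bool => (⟨idx (p x), hbound x⟩ : Fin (2 ^ N - 1))) := by
    intro x y hxy
    have hpe : p x = p y := idx_inj _ _ (by simpa [Fin.mk.injEq] using hxy)
    have h1 : List.ofFn x ∈ M (p x) := hp x
    have h2 : List.ofFn y ∈ M (p x) := by rw [hpe]; exact hp y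
    exact List.ofFn_injective (Part.mem_unique h1 h2)
  have hcard := Fintype.card_le_of_injective _ hinj
  simp only [Fintype.card_fun, Fintype.card_fin, Fintype.card_bool] at hcard
  have h1 : 1 ≤ 2 ^ N := Nat.one_le_two_pow
  omega

end NotSubadd


/-- Plain complexity is not subadditive: for every `ℓ` there are `a, b` with
`C(a ⋆ b) ≥ C(a) + C(b) + ℓ`. -/
theorem stmt7 (U : List Bool →. List Bool) (hU : Universal U) (ℓ : ℕ) :
    ∃ a b : List Bool, Cpx U a + Cpx U b + (ℓ : ℕ∞) ≤ Cpx U (a ++ b) := by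
  classical
  obtain ⟨hUpart, hUuniv⟩ := hU
  obtain ⟨c, hc⟩ := hUuniv (fun p => Part.some p) Computable.id.partrec
  obtain ⟨k, hk⟩ := hUuniv (fun p => Part.some (NotSubadd.Mfun p))
    NotSubadd.primrec_Mfun.to_comp.partrec
  set m := ℓ + k + c + 1 with hm
  set N := 2 ^ (m + 1) with hN
  obtain ⟨x, hxlen, hxinc⟩ := NotSubadd.exists_incompressible U N
  set w := x.take m with hw
  have hmN : m + 1 ≤ N := by have := Nat.lt_two_pow_self (n := m + 1); omega
  have hwlen : w.length = m := by
    rw [hw, List.length_take, hxlen]; omega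
  set n := NotSubadd.idx w with hn
  have hb := NotSubadd.idx_bounds w
  rw [hwlen, ← hn] at hb
  have hmn : m ≤ n := by have := Nat.lt_two_pow_self (n := m); omega
  have hnN : n + 2 ≤ N := by rw [hN]; omega
  refine ⟨x.take n, x.drop n, ?_⟩
  rw [List.take_append_drop]
  have hqlen : ((x.take n).drop m).length = n - m := by
    simp only [List.length_drop, List.length_take, hxlen]
    omega
  have hsplit : w ++ (x.take n).drop m = x.take n := by
    have ht : (x.take n).take m = x.take m := by
      rw [List.take_take]
      congr 1
      omega
    rw [hw, ← ht, List.take_append_drop]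
  have hMa : NotSubadd.Mfun (decide (n % 2 = 1) :: (x.take n).drop m) = x.take n := by
    have hcor := NotSubadd.Mfun_correct w ((x.take n).drop m)
      (by rw [hwlen, hqlen, ← hn]; omega)
    rw [hsplit, ← hn] at hcor
    exact hcor
  have h1 : Cpx U (x.take n) ≤ ((n - m + 1 : ℕ) : ℕ∞) + (k : ℕ∞) := by
    refine (hk _).trans (add_le_add ?_ le_rfl)
    have hmem : x.take n ∈ (fun p => Part.some (NotSubadd.Mfun p))
        (decide (n % 2 = 1) :: (x.take n).drop m) := Part.mem_some_iff.mpr hMa.symm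
    have hle := NotSubadd.cpx_le (M := fun p => Part.some (NotSubadd.Mfun p))
      (p := decide (n % 2 = 1) :: (x.take n).drop m) hmem
    have hlen : (decide (n % 2 = 1) :: (x.take n).drop m).length = n - m + 1 := by
      simp [hqlen]
    rw [hlen] at hle
    exact hle
  have h2 : Cpx U (x.drop n) ≤ ((N - n : ℕ) : ℕ∞) + (c : ℕ∞) := by
    refine (hc _).trans (add_le_add ?_ le_rfl)
    have hmem : x.drop n ∈ (fun p => (Part.some p : Part (List Bool))) (x.drop n) :=
      Part.mem_some_iff.mpr rfl
    have hle := NotSubadd.cpx_le (M := fun p => (Part.some p : Part (List Bool)))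
      (p := x.drop n) hmem
    have hlen : (x.drop n).length = N - n := by simp [List.length_drop, hxlen]
    rw [hlen] at hle
    exact hle
  have h3 : (N : ℕ∞) ≤ Cpx U x := NotSubadd.le_cpx hxinc
  refine le_trans ?_ h3
  calc Cpx U (x.take n) + Cpx U (x.drop n) + (ℓ : ℕ∞)
      ≤ (((n - m + 1 : ℕ) : ℕ∞) + (k : ℕ∞)) + (((N - n : ℕ) : ℕ∞) + (c : ℕ∞)) + (ℓ : ℕ∞) := by
        exact add_le_add (add_le_add h1 h2) le_rfl
    _ = ((n - m + 1 + k + (N - n + c) + ℓ : ℕ) : ℕ∞) := by push_cast; ring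
    _ = (N : ℕ∞) := by congr 1; omega
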